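/- Let a1,...,an be nonzero reals and let c_S ∈ R for all d-subsets S of [n]. Suppose that for any distinct indices i1,...,i_{d-1}, j, j' ∈ [n] we have c_{{i1,...,i_{d-1},j}}/a_j = c_{{i1,...,i_{d-1},j'}}/a_{j'}. Then there exists a constant K ∈ R such that c_S = K · prod_{i ∈ S} a_i for all d-subsets S of [n]. -/
import Mathlib


theorem ratio_condition_implies_product_form
    (n d : ℕ) (hd : 1 ≤ d) (hn : d + 1 ≤ n)
    (a : Fin n → ℝ) (ha : ∀ i, a i ≠ 0)
    (c : Finset (Fin n) → ℝ)
    (hratio : ∀ I : Finset (Fin n), I.card = d - 1 →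
      ∀ j j' : Fin n, j ∉ I → j' ∉ I → j ≠ j' →
        c (insert j I) / a j = c (insert j' I) / a j') :
    ∃ K : ℝ, ∀ S : Finset (Fin n), S.card = d → c S = K * ∏ i ∈ S, a i := by
  have hprod : ∀ S : Finset (Fin n), (∏ i ∈ S, a i) ≠ 0 := by
    intro S
    exact Finset.prod_ne_zero_iff.mpr fun i _ => ha i
  have key : ∀ k : ℕ, ∀ S T : Finset (Fin n), S.card = d → T.card = d →
      (S \ T).card ≤ k → c S / ∏ i ∈ S, a i = c T / ∏ i ∈ T, a i := by
    intro k
    induction k with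
    | zero =>
      intro S T hS hT hcard
      have : S \ T = ∅ := Finset.card_eq_zero.mp (Nat.le_zero.mp hcard)
      have hsub : S ⊆ T := by
        intro x hx
        by_contra hxT
        exact absurd (Finset.mem_sdiff.mpr ⟨hx, hxT⟩) (by simp [this])
      have : S = T := Finset.eq_of_subset_of_card_le hsub (by omega)
      rw [this]
    | succ k ih =>
      intro S T hS hT hcard
      by_cases hST : S = T
      · rw [hST]
      · have hne : (S \ T).Nonempty := by
          rw [Finset.sdiff_nonempty]
          intro hsub
          exact hST (Finset.eq_of_subset_of_card_le hsub (by omega))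
        obtain ⟨i, hi⟩ := hne
        have hiS : i ∈ S := (Finset.mem_sdiff.mp hi).1
        have hiT : i ∉ T := (Finset.mem_sdiff.mp hi).2
        have hne' : (T \ S).Nonempty := by
          rw [Finset.sdiff_nonempty]
          intro hsub
          exact hST (Finset.eq_of_subset_of_card_le hsub (by omega)).symm
        obtain ⟨j, hj⟩ := hne'
        have hjT : j ∈ T := (Finset.mem_sdiff.mp hj).1
        have hjS : j ∉ S := (Finset.mem_sdiff.mp hj).2
        set I := S.erase i with hI
        have hIcard : I.card = d - 1 := by
          rw [hI, Finset.card_erase_of_mem hiS, hS]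
        have hiI : i ∉ I := Finset.notMem_erase i S
        have hjI : j ∉ I := fun h => hjS (Finset.mem_of_mem_erase h)
        have hij : i ≠ j := fun h => hjS (h ▸ hiS)
        have hrat := hratio I hIcard i j hiI hjI hij
        rw [Finset.insert_erase hiS] at hrat
        set S' := insert j I with hS'
        have hS'card : S'.card = d := by
          rw [hS', Finset.card_insert_of_notMem hjI, hIcard]
          omega
        have hstep : c S / ∏ x ∈ S, a x = c S' / ∏ x ∈ S', a x := by
          have h1 : (∏ x ∈ S, a x) = a i * ∏ x ∈ I, a x := by
            rw [hI, Finset.mul_prod_erase S a hiS]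
          have h2 : (∏ x ∈ S', a x) = a j * ∏ x ∈ I, a x := by
            rw [hS', Finset.prod_insert hjI]
          rw [h1, h2]
          have hPI : (∏ x ∈ I, a x) ≠ 0 := hprod I
          rw [div_eq_div_iff (ha i) (ha j)] at hrat
          rw [div_eq_div_iff (mul_ne_zero (ha i) hPI) (mul_ne_zero (ha j) hPI)]
          linear_combination (∏ x ∈ I, a x) * hrat
        have hsub : S' \ T ⊆ (S \ T).erase i := by
          intro x hx
          rw [Finset.mem_sdiff] at hx
          obtain ⟨hx1, hx2⟩ := hx
          rw [hS', Finset.mem_insert] at hx1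
          rcases hx1 with h | h
          · exact absurd (h ▸ hjT) hx2
          · rw [Finset.mem_erase]
            exact ⟨Finset.ne_of_mem_erase h, Finset.mem_sdiff.mpr ⟨Finset.mem_of_mem_erase h, hx2⟩⟩
        have hle : (S' \ T).card ≤ k := by
          have := Finset.card_le_card hsub
          rw [Finset.card_erase_of_mem hi] at this
          omega
        rw [hstep]
        exact ih S' T hS'card hT hle
  obtain ⟨S₀, _, hS₀⟩ := Finset.exists_subset_card_eq
    (show d ≤ (Finset.univ : Finset (Fin n)).card by simpa using by omega)
  refine ⟨c S₀ / ∏ i ∈ S₀, a i, fun S hScard => ?_⟩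
  have := key (S \ S₀).card S S₀ hScard hS₀ le_rfl
  rw [← this, div_mul_cancel₀ _ (hprod S)]
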